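/- Let G be a finite abelian group, G₀ ⊆ G, and g ∈ G₀ with g ∈ ⟨G₀ \ {g}⟩. If ord(g) is a prime power, then there exists a subset E ⊆ G₀ \ {g} with |E| ≤ r(G) such that g ∈ ⟨E⟩. -/

import Mathlib

/-- A sequence over `G₀` (a multiset with entries in `G₀`) with sum zero. -/
def IsZeroSumSeq {G : Type*} [AddCommGroup G] (G₀ : Set G) (S : Multiset G) : Prop :=
  (∀ g ∈ S, g ∈ G₀) ∧ S.sum = 0

/-- A minimal zero-sum sequence (atom) over `G₀`. -/
def IsAtomSeq {G : Type*} [AddCommGroup G] (G₀ : Set G) (A : Multiset G) : Prop :=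
  IsZeroSumSeq G₀ A ∧ A ≠ 0 ∧ ∀ B ≤ A, B ≠ 0 → B.sum = 0 → B = A

/-- The set of lengths of factorizations of `B` into atoms over `G₀`. -/
def LengthSet {G : Type*} [AddCommGroup G] (G₀ : Set G) (B : Multiset G) : Set ℕ :=
  {k | ∃ F : Multiset (Multiset G), F.card = k ∧ (∀ A ∈ F, IsAtomSeq G₀ A) ∧ F.sum = B}

/-- The set of successive distances of a set of naturals. -/
def DistSet (L : Set ℕ) : Set ℕ :=
  {d | ∃ a b, a ∈ L ∧ b ∈ L ∧ a < b ∧ b - a = d ∧ ∀ c ∈ L, ¬(a < c ∧ c < b)}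

/-- The set of distances `Δ(G₀)`. -/
def DeltaSet {G : Type*} [AddCommGroup G] (G₀ : Set G) : Set ℕ :=
  {d | ∃ B : Multiset G, IsZeroSumSeq G₀ B ∧ d ∈ DistSet (LengthSet G₀ B)}

/-- The cross number of a sequence. -/
noncomputable def crossNum {G : Type*} [AddCommGroup G] (S : Multiset G) : ℚ :=
  (S.map (fun g => (1 : ℚ) / addOrderOf g)).sum

/-- `G₀` is an LCN-set: every atom has cross number at least 1. -/
def IsLCNSet {G : Type*} [AddCommGroup G] (G₀ : Set G) : Prop :=
  ∀ A : Multiset G, IsAtomSeq G₀ A → 1 ≤ crossNum A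

/-- The set of minimal distances `Δ*(G)`. -/
def DeltaStar (G : Type*) [AddCommGroup G] : Set ℕ :=
  {d | ∃ G₀ : Set G, DeltaSet G₀ ≠ ∅ ∧ d = sInf (DeltaSet G₀)}

/-- `m(G)`: the maximum of `min Δ(G₀)` over non-half-factorial LCN-sets `G₀`. -/
noncomputable def mConst (G : Type*) [AddCommGroup G] : ℕ :=
  sSup {d | ∃ G₀ : Set G, IsLCNSet G₀ ∧ DeltaSet G₀ ≠ ∅ ∧ d = sInf (DeltaSet G₀)}

/-- The rank of a finite abelian group: the maximal `k` such that `(ZMod p)^k`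
embeds into `G` for some prime `p`. -/
noncomputable def grank (G : Type*) [AddCommGroup G] : ℕ :=
  sSup {k | ∃ p : ℕ, p.Prime ∧ ∃ f : (Fin k → ZMod p) →+ G, Function.Injective f}

/-- The system of sets of lengths `L(G)`. -/
def SystemSets (G : Type*) [AddCommGroup G] : Set (Set ℕ) :=
  {L | ∃ B : Multiset G, B.sum = 0 ∧ L = LengthSet Set.univ B}

/-- The Davenport constant: the maximal length of a minimal zero-sum sequence. -/
noncomputable def DavenportC (G : Type*) [AddCommGroup G] : ℕ :=
  sSup {k | ∃ A : Multiset G, IsAtomSeq (Set.univ : Set G) A ∧ A.card = k}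


open AddSubgroup Function

/-- scalar multiplication by `c` as an `AddMonoidHom`. -/
private def nsmulHom {G : Type*} [AddCommGroup G] (c : ℕ) : G →+ G :=
  AddMonoidHom.mk' (fun x => c • x) (fun a b => smul_add c a b)

private lemma nsmulHom_apply {G : Type*} [AddCommGroup G] (c : ℕ) (x : G) :
    nsmulHom c x = c • x := rfl

/-- Nakayama's lemma for `p`-groups. -/
private lemma nakayama_pgroup {G : Type*} [AddCommGroup G] (p a : ℕ)
    (hpa : ∀ x : G, p ^ a • x = 0) (K : AddSubgroup G)
    (h : K ⊔ (nsmulHom (G := G) p).range = ⊤) : K = ⊤ := by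
  have key : ∀ j : ℕ, ∀ x : G, ∃ k ∈ K, ∃ y : G, x = k + p ^ j • y := by
    intro j
    induction j with
    | zero => exact fun x => ⟨0, K.zero_mem, x, by simp⟩
    | succ j ih =>
      intro x
      obtain ⟨k, hk, y, rfl⟩ := ih x
      have hy : y ∈ K ⊔ (nsmulHom (G := G) p).range := h ▸ AddSubgroup.mem_top y
      obtain ⟨k', hk', z, hz, hsum⟩ := (AddSubgroup.mem_sup).mp hy
      obtain ⟨w, rfl⟩ := hz
      refine ⟨k + p ^ j • k', K.add_mem hk (AddSubgroup.nsmul_mem K hk' _), w, ?_⟩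
      rw [← hsum, nsmulHom_apply, smul_add, add_assoc, smul_smul, pow_succ]
  ext x
  simp only [AddSubgroup.mem_top, iff_true]
  obtain ⟨k, hk, y, rfl⟩ := key a x
  rw [hpa y, add_zero]; exact hk

/-- The key structural lemma: if a finite abelian group `H` killed by `p ^ a` is generated
by a finset `S` which is minimal as a generating set, then `(ZMod p)^|S|` embeds in `H`. -/
private lemma key_embed {H : Type*} [AddCommGroup H] [Finite H] [DecidableEq H] (p a : ℕ) (hp : p.Prime)
    (hpa : ∀ x : H, p ^ a • x = 0) (S : Finset H)
    (hS : AddSubgroup.closure (S : Set H) = ⊤)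
    (hmin : ∀ e ∈ S, AddSubgroup.closure ((S.erase e : Finset H) : Set H) ≠ ⊤) :
    ∃ f : (Fin S.card → ZMod p) →+ H, Function.Injective f := by
  classical
  haveI : Fact p.Prime := ⟨hp⟩
  set φ : H →+ H := nsmulHom p with hφ
  set N : AddSubgroup H := φ.range with hN
  haveI : Module (ZMod p) (H ⧸ N) := QuotientAddGroup.zmodModule (n := p) (fun x => ⟨x, rfl⟩)
  set π : H →+ H ⧸ N := QuotientAddGroup.mk' N with hπ
  set v : {x // x ∈ S} → H ⧸ N := fun e => π e with hv
  -- linear independence of the images in H/pH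
  have hind : LinearIndependent (ZMod p) v := by
    by_contra hni
    obtain ⟨c, hc0, i, hci⟩ := Fintype.not_linearIndependent_iff.mp hni
    have hvi : v i ∈ Submodule.span (ZMod p) (v '' {j | j ≠ i}) := by
      have h1 : c i • v i = -∑ j ∈ Finset.univ.erase i, c j • v j := by
        have h := hc0
        rw [← Finset.add_sum_erase Finset.univ (fun j => c j • v j) (Finset.mem_univ i)] at h
        exact eq_neg_of_add_eq_zero_left h
      have h2 : v i = (c i)⁻¹ • (c i • v i) := by
        rw [smul_smul, inv_mul_cancel₀ hci, one_smul]
      rw [h2, h1]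
      refine Submodule.smul_mem _ _ (Submodule.neg_mem _ (Submodule.sum_mem _ ?_))
      intro j hj
      exact Submodule.smul_mem _ _ (Submodule.subset_span ⟨j, (Finset.mem_erase.mp hj).1, rfl⟩)
    set e : H := (i : H) with he
    have hclo : v i ∈ AddSubgroup.closure (π '' ((S.erase e : Finset H) : Set H)) := by
      have hle : Submodule.span (ZMod p) (v '' {j | j ≠ i}) ≤
          AddSubgroup.toZModSubmodule p
            (AddSubgroup.closure (π '' ((S.erase e : Finset H) : Set H))) := by
        rw [Submodule.span_le]
        rintro _ ⟨j, hj, rfl⟩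
        refine AddSubgroup.subset_closure ⟨j, ?_, rfl⟩
        simp only [Finset.coe_erase, Set.mem_diff, Set.mem_singleton_iff]
        exact ⟨j.2, fun hje => hj (Subtype.ext hje)⟩
      exact (AddSubgroup.mem_toZModSubmodule p).mp (hle hvi)
    rw [← AddMonoidHom.map_closure] at hclo
    obtain ⟨y, hy, hyx⟩ := hclo
    have hey : e ∈ AddSubgroup.closure ((S.erase e : Finset H) : Set H) ⊔ N := by
      refine AddSubgroup.mem_sup.mpr ⟨y, hy, e - y, ?_, by abel⟩
      have : π (e - y) = 0 := by
        rw [map_sub, hyx, sub_self]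
      rwa [← QuotientAddGroup.ker_mk' N, AddMonoidHom.mem_ker]
    have htop : AddSubgroup.closure ((S.erase e : Finset H) : Set H) ⊔ N = ⊤ := by
      rw [← top_le_iff, ← hS]
      rw [AddSubgroup.closure_le]
      intro s hs
      by_cases hse : s = e
      · subst hse; exact hey
      · exact SetLike.le_def.mp le_sup_left
          (AddSubgroup.subset_closure (Finset.mem_coe.mpr (Finset.mem_erase.mpr ⟨hse, hs⟩)))
    exact hmin e i.2 (nakayama_pgroup p a hpa _ htop)
  -- the linear-combination map into H/pH is injective
  set f0 : ({x // x ∈ S} → ZMod p) →+ H ⧸ N :=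
    AddMonoidHom.mk' (fun x => ∑ i, x i • v i)
      (fun x y => by simp [add_smul, Finset.sum_add_distrib]) with hf0
  have hf0inj : Function.Injective f0 := by
    rw [injective_iff_map_eq_zero]
    intro x hx
    funext i
    exact Fintype.linearIndependent_iff.mp hind x hx i
  -- identify the cardinalities of H/pH and the p-torsion subgroup V
  set V : AddSubgroup H := φ.ker with hV
  haveI : Module (ZMod p) V := AddCommGroup.zmodModule (n := p) (fun x => by
    ext
    have := x.2
    rw [AddMonoidHom.mem_ker, hφ, nsmulHom_apply] at this
    simpa using this)
  have hcard : Nat.card (H ⧸ N) = Nat.card V := by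
    have h1 := AddSubgroup.card_eq_card_quotient_mul_card_addSubgroup N
    have h2 := AddSubgroup.card_eq_card_quotient_mul_card_addSubgroup V
    have h3 : Nat.card (H ⧸ V) = Nat.card N := by
      rw [hV, hN]
      exact Nat.card_congr (QuotientAddGroup.quotientKerEquivRange φ).toEquiv
    have hNpos : 0 < Nat.card N := Nat.card_pos
    have : Nat.card (H ⧸ N) * Nat.card N = Nat.card N * Nat.card V := by
      rw [← h1, h2, h3]
    exact Nat.eq_of_mul_eq_mul_right hNpos (this.trans (mul_comm _ _))
  -- equal finrank, hence a linear equiv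
  haveI : Module.Finite (ZMod p) (H ⧸ N) := Module.Finite.of_finite
  haveI : Module.Finite (ZMod p) V := Module.Finite.of_finite
  have hfr : Module.finrank (ZMod p) (H ⧸ N) = Module.finrank (ZMod p) V := by
    haveI : Fintype (H ⧸ N) := Fintype.ofFinite _
    haveI : Fintype V := Fintype.ofFinite _
    have e1 : Fintype.card (H ⧸ N) = Fintype.card (ZMod p) ^ Module.finrank (ZMod p) (H ⧸ N) :=
      Module.card_eq_pow_finrank
    have e2 : Fintype.card V = Fintype.card (ZMod p) ^ Module.finrank (ZMod p) V :=
      Module.card_eq_pow_finrank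
    have := hcard
    rw [Nat.card_eq_fintype_card, Nat.card_eq_fintype_card, e1, e2, ZMod.card] at this
    exact Nat.pow_right_injective hp.two_le this
  obtain ⟨eqv⟩ := FiniteDimensional.nonempty_linearEquiv_of_finrank_eq hfr
  -- assemble the embedding
  let eS : Fin S.card ≃ {x // x ∈ S} := (S.equivFin).symm
  let pre : (Fin S.card → ZMod p) →+ ({x // x ∈ S} → ZMod p) :=
    AddMonoidHom.mk' (fun x => x ∘ eS.symm) (fun x y => rfl)
  have hpre : Function.Injective pre := by
    intro x y hxy
    funext i
    have := congrFun hxy (eS i)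
    simpa [pre] using this
  refine ⟨V.subtype.comp ((eqv.toLinearMap.toAddMonoidHom.comp f0).comp pre), ?_⟩
  exact Subtype.coe_injective.comp ((eqv.injective.comp hf0inj).comp hpre)

/-- From a finset of `p ^ a`-torsion elements generating `g`, extract a subset `E`
still generating `g` with an embedding of `(ZMod p)^|E|` into `G`. -/
private lemma extract_min {G : Type*} [AddCommGroup G] [Fintype G] (p a : ℕ) (hp : p.Prime)
    (T : Finset G) (hT : ∀ t ∈ T, p ^ a • t = 0) (g : G)
    (hg : g ∈ AddSubgroup.closure (T : Set G)) :
    ∃ E : Finset G, E ⊆ T ∧ g ∈ AddSubgroup.closure (E : Set G) ∧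
      ∃ f : (Fin E.card → ZMod p) →+ G, Function.Injective f := by
  classical
  have hne : (T.powerset.filter (fun (E : Finset G) => g ∈ AddSubgroup.closure (↑E : Set G))).Nonempty :=
    ⟨T, by simp [hg]⟩
  obtain ⟨E, hEmem, hEmin⟩ := Finset.exists_min_image
    (T.powerset.filter (fun (E : Finset G) => g ∈ AddSubgroup.closure (↑E : Set G)))
    (fun E => E.card) hne
  rw [Finset.mem_filter, Finset.mem_powerset] at hEmem
  obtain ⟨hET, hgE⟩ := hEmem
  refine ⟨E, hET, hgE, ?_⟩
  set H : AddSubgroup G := AddSubgroup.closure (E : Set G) with hH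
  let E' : Finset H := E.attach.image (fun e => (⟨e.1, AddSubgroup.subset_closure e.2⟩ : H))
  have hE'mem : ∀ x : H, x ∈ E' ↔ (x : G) ∈ E := by
    intro x
    simp only [E', Finset.mem_image, Finset.mem_attach, true_and, Subtype.exists]
    constructor
    · rintro ⟨e, he, rfl⟩; exact he
    · intro hx; exact ⟨x, hx, Subtype.ext rfl⟩
  have hE'coe : (E' : Set H) = ((↑) : H → G) ⁻¹' (E : Set G) := by
    ext x; simp [hE'mem x]
  have hinj : Function.Injective
      (fun e : {x // x ∈ E} => (⟨e.1, AddSubgroup.subset_closure e.2⟩ : H)) :=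
    fun x y hxy => by
      apply Subtype.ext
      have h2 := congrArg (Subtype.val : H → G) hxy
      simpa using h2
  have hcard : E'.card = E.card := by
    simp only [E']
    rw [Finset.card_image_of_injective _ hinj, Finset.card_attach]
  -- torsion
  have hEkill : ∀ x : H, p ^ a • x = 0 := by
    intro x
    have hxmem : (x : G) ∈ AddSubgroup.closure (E : Set G) := x.2
    have hker : AddSubgroup.closure (E : Set G) ≤ (nsmulHom (G := G) (p ^ a)).ker := by
      rw [AddSubgroup.closure_le]
      intro t ht
      rw [SetLike.mem_coe, AddMonoidHom.mem_ker, nsmulHom_apply]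
      exact hT t (hET ht)
    have : p ^ a • (x : G) = 0 := hker hxmem
    ext
    simpa using this
  -- generation
  have hE'top : AddSubgroup.closure (E' : Set H) = ⊤ := by
    rw [hE'coe]
    exact AddSubgroup.closure_preimage_eq_top (E : Set G)
  -- minimality
  have hE'min : ∀ e' ∈ E', AddSubgroup.closure ((E'.erase e' : Finset H) : Set H) ≠ ⊤ := by
    intro e' he' htop
    have heE : (e' : G) ∈ E := (hE'mem e').mp he'
    have hcoe : ((↑) : H → G) '' ((E'.erase e' : Finset H) : Set H) = ((E.erase (e' : G) : Finset G) : Set G) := by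
      ext x
      constructor
      · rintro ⟨y, hy, rfl⟩
        rw [Finset.mem_coe, Finset.mem_erase] at hy
        rw [Finset.mem_coe, Finset.mem_erase]
        exact ⟨fun h => hy.1 (Subtype.ext h), (hE'mem y).mp hy.2⟩
      · intro hx
        rw [Finset.mem_coe, Finset.mem_erase] at hx
        refine ⟨⟨x, AddSubgroup.subset_closure hx.2⟩, ?_, rfl⟩
        rw [Finset.mem_coe, Finset.mem_erase]
        exact ⟨fun h => hx.1 (congrArg Subtype.val h), (hE'mem _).mpr hx.2⟩
    have hgH : (⟨g, hgE⟩ : H) ∈ AddSubgroup.closure ((E'.erase e' : Finset H) : Set H) :=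
      htop ▸ AddSubgroup.mem_top _
    have : g ∈ AddSubgroup.closure ((E.erase (e' : G) : Finset G) : Set G) := by
      have := AddSubgroup.mem_map_of_mem H.subtype hgH
      rw [AddMonoidHom.map_closure, AddSubgroup.coe_subtype, hcoe] at this
      simpa using this
    have hlt : E.card ≤ (E.erase (e' : G)).card :=
      hEmin _ (by
        rw [Finset.mem_filter, Finset.mem_powerset]
        exact ⟨(Finset.erase_subset _ _).trans hET, this⟩)
    have := Finset.card_erase_lt_of_mem heE
    omega
  obtain ⟨f, hf⟩ := key_embed p a hp hEkill E' hE'top hE'min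
  let eF : Fin E'.card ≃ Fin E.card := finCongr hcard
  let pre : (Fin E.card → ZMod p) →+ (Fin E'.card → ZMod p) :=
    AddMonoidHom.mk' (fun x => x ∘ eF) (fun x y => rfl)
  have hpre : Function.Injective pre := fun x y hxy => funext fun i => by
    have h3 := congrFun hxy (eF.symm i)
    simpa [pre] using h3
  exact ⟨H.subtype.comp (f.comp pre), Subtype.coe_injective.comp (hf.comp hpre)⟩

theorem stmt_4 {G : Type*} [AddCommGroup G] [Fintype G] (G₀ : Set G)
    (g : G) (hg : g ∈ G₀) (hgen : g ∈ AddSubgroup.closure (G₀ \ {g}))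
    (hpp : IsPrimePow (addOrderOf g)) :
    ∃ E : Set G, E ⊆ G₀ \ {g} ∧ E.ncard ≤ grank G ∧ g ∈ AddSubgroup.closure E := by
  classical
  obtain ⟨p, k, hpp', hk, hord⟩ := hpp
  have hp : p.Prime := hpp'.nat_prime
  haveI : Fact p.Prime := ⟨hp⟩
  set n := Fintype.card G with hn
  have hn0 : n ≠ 0 := Fintype.card_ne_zero
  set a := n.factorization p with ha
  set m := ordCompl[p] n with hm
  have hco : Nat.Coprime (p ^ a) m := (Nat.coprime_ordCompl hp hn0).pow_left a
  obtain ⟨c, hc1, hc2⟩ := Nat.chineseRemainder hco 1 0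
  have hpam : p ^ a * m = n := Nat.ordProj_mul_ordCompl_eq_self n p
  have hmc : m ∣ c := Nat.modEq_zero_iff_dvd.mp hc2
  -- every c • x is p-power torsion
  have hkill : ∀ x : G, p ^ a • (c • x) = 0 := by
    intro x
    rw [smul_smul]
    have hdvd : n ∣ p ^ a * c := hpam ▸ mul_dvd_mul_left (p ^ a) hmc
    have hxn : addOrderOf x ∣ p ^ a * c := dvd_trans (addOrderOf_dvd_card) hdvd
    exact addOrderOf_dvd_iff_nsmul_eq_zero.mp hxn
  -- c • g = g
  have hpk_n : p ^ k ∣ n := hord ▸ addOrderOf_dvd_card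
  have hka : k ≤ a := (Nat.Prime.pow_dvd_iff_le_factorization hp hn0).mp hpk_n
  have hc1' : c ≡ 1 [MOD p ^ k] := hc1.of_dvd (pow_dvd_pow p hka)
  have hc_pos : 1 ≤ c := by
    rcases Nat.eq_zero_or_pos c with h0 | h1
    · exfalso
      subst h0
      have hdvd1 : p ^ k ∣ 1 - 0 := (Nat.modEq_iff_dvd' (Nat.zero_le 1)).mp hc1'
      simp only [Nat.sub_zero] at hdvd1
      have hle1 := Nat.le_of_dvd one_pos hdvd1
      have hgt : 1 < p ^ k := Nat.one_lt_pow (by omega) hp.one_lt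
      omega
    · exact h1
  have hcg : c • g = g := by
    have hdvd : addOrderOf g ∣ c - 1 := by
      rw [← hord]
      exact (Nat.modEq_iff_dvd' hc_pos).mp hc1'.symm
    have h0 : (c - 1) • g = 0 := addOrderOf_dvd_iff_nsmul_eq_zero.mp hdvd
    calc c • g = ((c - 1) + 1) • g := by rw [Nat.sub_add_cancel hc_pos]
    _ = (c - 1) • g + 1 • g := by rw [add_nsmul]
    _ = g := by rw [h0, one_smul, zero_add]
  -- the image of G₀ \ {g} under multiplication by c
  set S : Set G := G₀ \ {g} with hS
  set ψ : G →+ G := nsmulHom c with hψ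
  have hgT : g ∈ AddSubgroup.closure (ψ '' S) := by
    have h1 : ψ g ∈ AddSubgroup.map ψ (AddSubgroup.closure S) :=
      AddSubgroup.mem_map_of_mem ψ hgen
    rw [AddMonoidHom.map_closure] at h1
    rwa [show ψ g = g from hcg] at h1
  set T : Finset G := (ψ '' S).toFinset with hT
  have hTcoe : (T : Set G) = ψ '' S := Set.coe_toFinset _
  have hTkill : ∀ t ∈ T, p ^ a • t = 0 := by
    intro t ht
    rw [← Finset.mem_coe, hTcoe] at ht
    obtain ⟨x, _, rfl⟩ := ht
    exact hkill x
  obtain ⟨E, hET, hgE, f, hf⟩ := extract_min p a hp T hTkill g (by rwa [hTcoe])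
  -- choose preimages in S
  have hmem : ∀ e : {x // x ∈ E}, ∃ s, s ∈ S ∧ c • s = (e : G) := by
    intro e
    have h1 : (e : G) ∈ T := hET e.2
    rw [← Finset.mem_coe, hTcoe] at h1
    obtain ⟨s, hs, hcs⟩ := h1
    exact ⟨s, hs, hcs⟩
  choose sel hsel hcsel using hmem
  set E₀ : Finset G := E.attach.image sel with hE₀
  refine ⟨(E₀ : Set G), ?_, ?_, ?_⟩
  · intro x hx
    rw [Finset.mem_coe, hE₀, Finset.mem_image] at hx
    obtain ⟨e, _, rfl⟩ := hx
    exact hsel e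
  · -- cardinality bound
    have h1 : (E₀ : Set G).ncard = E₀.card := Set.ncard_coe_finset E₀
    have h2 : E₀.card ≤ E.card := by
      calc E₀.card ≤ E.attach.card := Finset.card_image_le
      _ = E.card := Finset.card_attach
    have h3 : E.card ≤ grank G := by
      apply le_csSup
      · -- bounded above
        refine ⟨Fintype.card G, ?_⟩
        rintro j ⟨q, hq, fj, hfj⟩
        haveI : Fact q.Prime := ⟨hq⟩
        have hcard : Fintype.card (Fin j → ZMod q) ≤ Fintype.card G :=
          Fintype.card_le_of_injective fj hfj
        rw [Fintype.card_fun, ZMod.card, Fintype.card_fin] at hcard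
        have : j < 2 ^ j := Nat.lt_two_pow_self
        have h2j : 2 ^ j ≤ q ^ j := Nat.pow_le_pow_left hq.two_le j
        omega
      · exact ⟨p, hp, f, hf⟩
    omega
  · -- g ∈ closure E₀
    have hle : AddSubgroup.closure (E : Set G) ≤ AddSubgroup.closure (E₀ : Set G) := by
      rw [AddSubgroup.closure_le]
      intro e he
      have he' : e ∈ E := he
      have : sel ⟨e, he'⟩ ∈ (E₀ : Set G) := by
        rw [Finset.mem_coe, hE₀, Finset.mem_image]
        exact ⟨⟨e, he'⟩, Finset.mem_attach _ _, rfl⟩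
      have h2 : c • sel ⟨e, he'⟩ ∈ AddSubgroup.closure (E₀ : Set G) :=
        AddSubgroup.nsmul_mem _ (AddSubgroup.subset_closure this) c
      rwa [hcsel ⟨e, he'⟩] at h2
    exact hle hgE
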